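/- Let K be an algebraically closed field, let V and W be nonzero finite-dimensional K-vector spaces with dim V = m and dim W = n, and let f : V → V and g : W → W be diagonalizable K-linear endomorphisms. Suppose α ∈ K is a nonzero scalar such that the eigenspace ker(α·id − f ⊗ g) of the Kronecker product f ⊗ g (the induced endomorphism of V ⊗[K] W) has dimension strictly greater than mn − min(m,n). Then both f and g are homotheties: there exist λ, μ ∈ K with f = λ·id_V and g = μ·id_W (and λμ = α). -/

import Mathlib

open TensorProduct

section Aux
variable {K V W : Type*} [Field K] [AddCommGroup V] [Module K V]
  [AddCommGroup W] [Module K W]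

lemma kron_pair_li (f : Module.End K V) {v1 v2 : V} {l1 l2 : K}
    (hv1 : v1 ≠ 0) (hv2 : v2 ≠ 0) (he1 : f v1 = l1 • v1) (he2 : f v2 = l2 • v2)
    (hne : l1 ≠ l2) : LinearIndependent K ![v1, v2] := by
  rw [LinearIndependent.pair_iff]
  intro s t hst
  have hA : (s * l1) • v1 + (t * l2) • v2 = 0 := by
    have h := congrArg f hst
    simpa [map_add, map_smul, he1, he2, smul_smul] using h
  have hB : (s * l2) • v1 + (t * l2) • v2 = 0 := by
    have h := congrArg (fun x => l2 • x) hst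
    simpa [smul_add, smul_smul, mul_comm l2 s, mul_comm l2 t] using h
  have hs : (s * l1 - s * l2) • v1 = 0 := by
    rw [sub_smul]
    calc (s * l1) • v1 - (s * l2) • v1
        = ((s * l1) • v1 + (t * l2) • v2) - ((s * l2) • v1 + (t * l2) • v2) := by abel
      _ = 0 := by rw [hA, hB, sub_zero]
  have hs0 : s = 0 := by
    rcases smul_eq_zero.mp hs with h | h
    · rcases mul_eq_zero.mp (by rw [← mul_sub] at h; exact h) with h' | h'
      · exact h'
      · exact absurd (sub_eq_zero.mp h') hne
    · exact absurd h hv1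
  refine ⟨hs0, ?_⟩
  rw [hs0, zero_smul, zero_add] at hst
  rcases smul_eq_zero.mp hst with h | h
  · exact h
  · exact absurd h hv2

lemma kron_exists_dual_pair {v1 v2 : V} (hli : LinearIndependent K ![v1, v2]) :
    ∃ φ ψ : V →ₗ[K] K, φ v1 = 1 ∧ φ v2 = 0 ∧ ψ v1 = 0 ∧ ψ v2 = 1 := by
  classical
  let b := Module.Basis.span hli
  obtain ⟨φ, hφ⟩ := LinearMap.exists_extend (b.coord 0)
  obtain ⟨ψ, hψ⟩ := LinearMap.exists_extend (b.coord 1)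
  have hb0 : ((b 0 : _) : V) = v1 := by exact congrArg Subtype.val (Module.Basis.span_apply hli 0)
  have hb1 : ((b 1 : _) : V) = v2 := by exact congrArg Subtype.val (Module.Basis.span_apply hli 1)
  refine ⟨φ, ψ, ?_, ?_, ?_, ?_⟩
  · have h := LinearMap.congr_fun hφ (b 0)
    simpa [hb0, Module.Basis.coord_apply, Module.Basis.repr_self] using h
  · have h := LinearMap.congr_fun hφ (b 1)
    simpa [hb1, Module.Basis.coord_apply, Module.Basis.repr_self] using h
  · have h := LinearMap.congr_fun hψ (b 0)
    simpa [hb0, Module.Basis.coord_apply, Module.Basis.repr_self] using h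
  · have h := LinearMap.congr_fun hψ (b 1)
    simpa [hb1, Module.Basis.coord_apply, Module.Basis.repr_self] using h

lemma kron_tmul_indep {v1 v2 : V} (hli : LinearIndependent K ![v1, v2]) {a b : W}
    (h : v1 ⊗ₜ[K] a + v2 ⊗ₜ[K] b = 0) : a = 0 ∧ b = 0 := by
  obtain ⟨φ, ψ, h1, h2, h3, h4⟩ := kron_exists_dual_pair hli
  constructor
  · have := congrArg (TensorProduct.lift ((LinearMap.lsmul K W).comp φ)) h
    simpa [map_add, TensorProduct.lift.tmul, h1, h2] using this
  · have := congrArg (TensorProduct.lift ((LinearMap.lsmul K W).comp ψ)) h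
    simpa [map_add, TensorProduct.lift.tmul, h3, h4] using this

end Aux
section Rank
variable {K V W : Type*} [Field K] [AddCommGroup V] [Module K V]
  [AddCommGroup W] [Module K W] [FiniteDimensional K V] [FiniteDimensional K W]

lemma kron_rank_lower (f : Module.End K V) (g : Module.End K W) {α : K} (hα : α ≠ 0)
    {v1 v2 : V} {l1 l2 : K} (hv1 : v1 ≠ 0) (hv2 : v2 ≠ 0)
    (he1 : f v1 = l1 • v1) (he2 : f v2 = l2 • v2) (hne : l1 ≠ l2) :
    Module.finrank K W ≤ Module.finrank K
      (LinearMap.range (α • (LinearMap.id : Module.End K (V ⊗[K] W))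
        - TensorProduct.map f g)) := by
  classical
  set T : Module.End K (V ⊗[K] W) := α • LinearMap.id - TensorProduct.map f g with hT
  set h1 : Module.End K W := α • LinearMap.id - l1 • g with hh1
  set h2 : Module.End K W := α • LinearMap.id - l2 • g with hh2
  have hli : LinearIndependent K ![v1, v2] := kron_pair_li f hv1 hv2 he1 he2 hne
  have key1 : ∀ w, T (v1 ⊗ₜ[K] w) = v1 ⊗ₜ[K] (h1 w) := by
    intro w
    rw [hT, hh1]
    simp only [LinearMap.sub_apply, LinearMap.smul_apply, LinearMap.id_apply,
      TensorProduct.map_tmul, he1, TensorProduct.tmul_sub, TensorProduct.tmul_smul,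
      TensorProduct.smul_tmul']
  have key2 : ∀ w, T (v2 ⊗ₜ[K] w) = v2 ⊗ₜ[K] (h2 w) := by
    intro w
    rw [hT, hh2]
    simp only [LinearMap.sub_apply, LinearMap.smul_apply, LinearMap.id_apply,
      TensorProduct.map_tmul, he2, TensorProduct.tmul_sub, TensorProduct.tmul_smul,
      TensorProduct.smul_tmul']
  -- kernels intersect trivially
  have hker : ∀ w, w ∈ LinearMap.ker h1 → w ∈ LinearMap.ker h2 → w = 0 := by
    intro w hw1 hw2
    rw [LinearMap.mem_ker, hh1, LinearMap.sub_apply, LinearMap.smul_apply,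
      LinearMap.smul_apply, LinearMap.id_apply, sub_eq_zero] at hw1
    rw [LinearMap.mem_ker, hh2, LinearMap.sub_apply, LinearMap.smul_apply,
      LinearMap.smul_apply, LinearMap.id_apply, sub_eq_zero] at hw2
    have hgw : g w = 0 := by
      have h : (l1 - l2) • g w = 0 := by rw [sub_smul, ← hw1, ← hw2, sub_self]
      rcases smul_eq_zero.mp h with h' | h'
      · exact absurd (sub_eq_zero.mp h') hne
      · exact h'
    have : α • w = 0 := by rw [hw1, hgw, smul_zero]
    exact (smul_eq_zero.mp this).resolve_left hα
  have hinf : LinearMap.ker h1 ⊓ LinearMap.ker h2 = ⊥ := by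
    rw [eq_bot_iff]
    rintro w hw
    rw [Submodule.mem_inf] at hw
    exact hker w hw.1 hw.2
  have hsup := Submodule.finrank_sup_add_finrank_inf_eq (LinearMap.ker h1) (LinearMap.ker h2)
  rw [hinf, finrank_bot, add_zero] at hsup
  have hle : Module.finrank K ↥(LinearMap.ker h1 ⊔ LinearMap.ker h2) ≤ Module.finrank K W :=
    Submodule.finrank_le _
  have hr1 := LinearMap.finrank_range_add_finrank_ker h1
  have hr2 := LinearMap.finrank_range_add_finrank_ker h2
  have hn : Module.finrank K W ≤
      Module.finrank K (LinearMap.range h1) + Module.finrank K (LinearMap.range h2) := by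
    omega
  -- the injection
  let ψ : (W × W) →ₗ[K] V ⊗[K] W :=
    ((TensorProduct.mk K V W v1).comp (LinearMap.fst K W W)) +
    ((TensorProduct.mk K V W v2).comp (LinearMap.snd K W W))
  have hψ : ∀ a b : W, ψ (a, b) = v1 ⊗ₜ[K] a + v2 ⊗ₜ[K] b := fun a b => rfl
  let Φ0 : (↥(LinearMap.range h1) × ↥(LinearMap.range h2)) →ₗ[K] V ⊗[K] W :=
    ψ.comp (((LinearMap.range h1).subtype).prodMap ((LinearMap.range h2).subtype))
  have hΦ0 : ∀ x : ↥(LinearMap.range h1) × ↥(LinearMap.range h2),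
      Φ0 x = v1 ⊗ₜ[K] (x.1 : W) + v2 ⊗ₜ[K] (x.2 : W) := fun x => rfl
  have hΦ0range : ∀ x, Φ0 x ∈ LinearMap.range T := by
    rintro ⟨⟨a, ha⟩, ⟨b, hb⟩⟩
    obtain ⟨u1, hu1⟩ := ha
    obtain ⟨u2, hu2⟩ := hb
    refine ⟨v1 ⊗ₜ[K] u1 + v2 ⊗ₜ[K] u2, ?_⟩
    rw [map_add, key1, key2, hu1, hu2, hΦ0]
  have hΦ0inj : Function.Injective Φ0 := by
    rw [← LinearMap.ker_eq_bot, eq_bot_iff]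
    rintro ⟨⟨a, ha⟩, ⟨b, hb⟩⟩ hx
    rw [LinearMap.mem_ker, hΦ0] at hx
    obtain ⟨ha0, hb0⟩ := kron_tmul_indep hli hx
    simp only [Submodule.mem_bot, Prod.mk_eq_zero, Submodule.mk_eq_zero]
    exact ⟨ha0, hb0⟩
  let Φ : (↥(LinearMap.range h1) × ↥(LinearMap.range h2)) →ₗ[K] ↥(LinearMap.range T) :=
    Φ0.codRestrict _ hΦ0range
  have hΦinj : Function.Injective Φ := fun x y hxy =>
    hΦ0inj (congrArg Subtype.val hxy)
  have hfin := LinearMap.finrank_le_finrank_of_injective hΦinj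
  rw [Module.finrank_prod] at hfin
  omega

end Rank

lemma kron_homothety_of {K V : Type*} [Field K] [AddCommGroup V] [Module K V] [Nontrivial V]
    (f : Module.End K V) (hf : (⨆ μ : K, Module.End.eigenspace f μ) = ⊤)
    (h : ∀ l1 l2 : K, l1 ≠ l2 →
      Module.End.eigenspace f l1 = ⊥ ∨ Module.End.eigenspace f l2 = ⊥) :
    ∃ lam : K, f = lam • (LinearMap.id : Module.End K V) := by
  have hex : ∃ l0 : K, Module.End.eigenspace f l0 ≠ ⊥ := by
    by_contra hcon
    push_neg at hcon
    have : (⨆ μ : K, Module.End.eigenspace f μ) = ⊥ := by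
      simp [hcon]
    rw [hf] at this
    exact absurd this top_ne_bot
  obtain ⟨l0, hl0⟩ := hex
  have htop : Module.End.eigenspace f l0 = ⊤ := by
    rw [← hf]
    apply le_antisymm (le_iSup _ l0)
    apply iSup_le
    intro l
    by_cases hl : l = l0
    · subst hl; exact le_rfl
    · rcases h l l0 hl with h' | h'
      · rw [h']; exact bot_le
      · exact absurd h' hl0
  refine ⟨l0, ?_⟩
  ext v
  have hv : v ∈ Module.End.eigenspace f l0 := htop ▸ Submodule.mem_top
  rw [Module.End.mem_eigenspace_iff] at hv
  simpa using hv


/-- **Lemma 7.6 (Kronecker products).** If the Kronecker product `f ⊗ g` of two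
diagonalizable endomorphisms of nonzero finite-dimensional vector spaces over an
algebraically closed field has an eigenvalue `α ≠ 0` whose eigenspace has dimension
strictly greater than `m * n - min m n`, then `f` and `g` are homotheties. -/
theorem kronecker_eigenspace_large_implies_homothety
    {K : Type*} [Field K] [IsAlgClosed K]
    {V W : Type*} [AddCommGroup V] [Module K V] [AddCommGroup W] [Module K W]
    [FiniteDimensional K V] [FiniteDimensional K W]
    [Nontrivial V] [Nontrivial W]
    (f : Module.End K V) (g : Module.End K W)
    (hf : (⨆ μ : K, Module.End.eigenspace f μ) = ⊤)
    (hg : (⨆ μ : K, Module.End.eigenspace g μ) = ⊤)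
    (α : K) (hα : α ≠ 0)
    (hdim : Module.finrank K V * Module.finrank K W
        - min (Module.finrank K V) (Module.finrank K W)
      < Module.finrank K
          (LinearMap.ker (α • (LinearMap.id : Module.End K (V ⊗[K] W))
            - TensorProduct.map f g))) :
    ∃ lam mu : K, f = lam • (LinearMap.id : Module.End K V)
      ∧ g = mu • (LinearMap.id : Module.End K W) ∧ lam * mu = α := by
  classical
  set T : Module.End K (V ⊗[K] W) := α • LinearMap.id - TensorProduct.map f g with hT
  set T' : Module.End K (W ⊗[K] V) := α • LinearMap.id - TensorProduct.map g f with hT'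
  have hsum : Module.finrank K ↥(LinearMap.range T) + Module.finrank K ↥(LinearMap.ker T)
      = Module.finrank K V * Module.finrank K W := by
    rw [← Module.finrank_tensorProduct]
    exact LinearMap.finrank_range_add_finrank_ker T
  have hminV := Nat.min_le_left (Module.finrank K V) (Module.finrank K W)
  have hminW := Nat.min_le_right (Module.finrank K V) (Module.finrank K W)
  rw [← hsum] at hdim
  have hconj : T' = (TensorProduct.comm K V W).toLinearMap ∘ₗ
      (T ∘ₗ (TensorProduct.comm K V W).symm.toLinearMap) := by
    apply TensorProduct.ext'
    intro w v
    simp [hT, hT', TensorProduct.comm_tmul, TensorProduct.comm_symm_tmul,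
      map_sub, map_smul]
  have hrange' : Module.finrank K ↥(LinearMap.range T')
      = Module.finrank K ↥(LinearMap.range T) := by
    rw [hconj, LinearMap.range_comp,
      LinearMap.range_comp_of_range_eq_top _ (LinearEquiv.range _),
      LinearEquiv.finrank_map_eq]
  -- f is a homothety
  have hfhom : ∃ lam : K, f = lam • (LinearMap.id : Module.End K V) := by
    by_contra hcon
    have hpair : ∃ l1 l2 : K, l1 ≠ l2 ∧ Module.End.eigenspace f l1 ≠ ⊥ ∧
        Module.End.eigenspace f l2 ≠ ⊥ := by
      by_contra h'
      push_neg at h'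
      refine hcon (kron_homothety_of f hf (fun l1 l2 hne => ?_))
      by_cases hb : Module.End.eigenspace f l1 = ⊥
      · exact Or.inl hb
      · exact Or.inr (h' l1 l2 hne hb)
    obtain ⟨l1, l2, hne, hb1, hb2⟩ := hpair
    obtain ⟨v1, hv1m, hv1⟩ := Submodule.exists_mem_ne_zero_of_ne_bot hb1
    obtain ⟨v2, hv2m, hv2⟩ := Submodule.exists_mem_ne_zero_of_ne_bot hb2
    have hrank := kron_rank_lower f g hα hv1 hv2
      (Module.End.mem_eigenspace_iff.mp hv1m) (Module.End.mem_eigenspace_iff.mp hv2m) hne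
    rw [← hT] at hrank
    omega
  -- g is a homothety
  have hghom : ∃ mu : K, g = mu • (LinearMap.id : Module.End K W) := by
    by_contra hcon
    have hpair : ∃ l1 l2 : K, l1 ≠ l2 ∧ Module.End.eigenspace g l1 ≠ ⊥ ∧
        Module.End.eigenspace g l2 ≠ ⊥ := by
      by_contra h'
      push_neg at h'
      refine hcon (kron_homothety_of g hg (fun l1 l2 hne => ?_))
      by_cases hb : Module.End.eigenspace g l1 = ⊥
      · exact Or.inl hb
      · exact Or.inr (h' l1 l2 hne hb)
    obtain ⟨l1, l2, hne, hb1, hb2⟩ := hpair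
    obtain ⟨w1, hw1m, hw1⟩ := Submodule.exists_mem_ne_zero_of_ne_bot hb1
    obtain ⟨w2, hw2m, hw2⟩ := Submodule.exists_mem_ne_zero_of_ne_bot hb2
    have hrank := kron_rank_lower g f hα hw1 hw2
      (Module.End.mem_eigenspace_iff.mp hw1m) (Module.End.mem_eigenspace_iff.mp hw2m) hne
    rw [← hT', hrange'] at hrank
    omega
  obtain ⟨lam, hlam⟩ := hfhom
  obtain ⟨mu, hmu⟩ := hghom
  refine ⟨lam, mu, hlam, hmu, ?_⟩
  have hTid : T = (α - lam * mu) • (LinearMap.id : Module.End K (V ⊗[K] W)) := by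
    rw [hT, hlam, hmu]
    apply TensorProduct.ext'
    intro v w
    simp only [LinearMap.sub_apply, LinearMap.smul_apply, LinearMap.id_apply,
      TensorProduct.map_tmul, TensorProduct.tmul_smul, TensorProduct.smul_tmul',
      smul_smul, sub_smul, mul_comm mu lam]
  have hNpos : 0 < Module.finrank K ↥(LinearMap.ker T) :=
    lt_of_le_of_lt (Nat.zero_le _) hdim
  have hkerne : LinearMap.ker T ≠ ⊥ := by
    intro hbot
    rw [hbot, finrank_bot] at hNpos
    exact lt_irrefl 0 hNpos
  obtain ⟨y, hy, hy0⟩ := Submodule.exists_mem_ne_zero_of_ne_bot hkerne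
  rw [LinearMap.mem_ker, hTid] at hy
  simp only [LinearMap.smul_apply, LinearMap.id_apply] at hy
  rcases smul_eq_zero.mp hy with h | h
  · exact (sub_eq_zero.mp h).symm
  · exact absurd h hy0
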